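/- Let f : ℝⁿ → ℝ be twice continuously differentiable and convex, with each partial derivative uniformly Lipschitz along its own coordinate with common constant L_max > 0 (i.e. |∂ᵢf(x + t eᵢ) − ∂ᵢf(x)| ≤ L_max·|t| for all x ∈ ℝⁿ, t ∈ ℝ, i ∈ {1,…,n}). Let x* be a global minimizer of f with f* = f(x*), and suppose that for every x with f(x) ≤ f(x₀) one has ‖x − x*‖ ≤ R₀. Let (iₖ)ₖ be i.i.d. indices uniformly distributed on {1,…,n} and define the randomized coordinate descent iterates x₀ ∈ ℝⁿ, x_{k+1} = x_k − (1/L_max)·∂_{i_k}f(x_k)·e_{i_k}. Then for every k ≥ 1, the expectation over the random indices satisfies E[f(x_k)] − f* ≤ 2 n L_max R₀² / k. -/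

import Mathlib

open scoped BigOperators

/-- The `i`-th partial derivative of `f` at `x`, i.e. `[∇f(x)]ᵢ`. -/
noncomputable def partialDeriv' {n : ℕ} (f : EuclideanSpace ℝ (Fin n) → ℝ)
    (x : EuclideanSpace ℝ (Fin n)) (i : Fin n) : ℝ :=
  fderiv ℝ f x (EuclideanSpace.single i 1)

/-- One coordinate gradient step with step size `1/L` along coordinate `i`:
`x ↦ x − (1/L)·∂ᵢf(x)·eᵢ`. -/
noncomputable def cdStep {n : ℕ} (f : EuclideanSpace ℝ (Fin n) → ℝ) (L : ℝ)
    (x : EuclideanSpace ℝ (Fin n)) (i : Fin n) : EuclideanSpace ℝ (Fin n) :=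
  x - (partialDeriv' f x i / L) • EuclideanSpace.single i 1

/-- The randomized coordinate descent iterates driven by the index sequence `ω`:
`x₀` is given, and `x_{k+1} = x_k − (1/L)·∂_{ω k}f(x_k)·e_{ω k}`. -/
noncomputable def cdIter {n : ℕ} (f : EuclideanSpace ℝ (Fin n) → ℝ) (L : ℝ)
    (x₀ : EuclideanSpace ℝ (Fin n)) (ω : ℕ → Fin n) : ℕ → EuclideanSpace ℝ (Fin n)
  | 0 => x₀
  | k + 1 => cdStep f L (cdIter f L x₀ ω k) (ω k)

lemma hasDerivAt_line {n : ℕ} {f : EuclideanSpace ℝ (Fin n) → ℝ} (hf : Differentiable ℝ f)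
    (x v : EuclideanSpace ℝ (Fin n)) (t₀ : ℝ) :
    HasDerivAt (fun t : ℝ => f (x + t • v)) (fderiv ℝ f (x + t₀ • v) v) t₀ := by
  have h1 : HasDerivAt (fun t : ℝ => x + t • v) v t₀ := by
    simpa using ((hasDerivAt_id t₀).smul_const v).const_add x
  exact (hf (x + t₀ • v)).hasFDerivAt.comp_hasDerivAt t₀ h1

-- quadratic upper bound along coordinate i
lemma quad_bound {n : ℕ} {f : EuclideanSpace ℝ (Fin n) → ℝ} (hf : Differentiable ℝ f)
    {Lmax : ℝ} (hL : 0 < Lmax)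
    (hLip : ∀ (x : EuclideanSpace ℝ (Fin n)) (t : ℝ) (i : Fin n),
      |partialDeriv' f (x + t • EuclideanSpace.single i 1) i - partialDeriv' f x i| ≤
        Lmax * |t|)
    (x : EuclideanSpace ℝ (Fin n)) (i : Fin n) (t : ℝ) :
    f (x + t • EuclideanSpace.single i 1) ≤
      f x + partialDeriv' f x i * t + Lmax / 2 * t ^ 2 := by
  set e : EuclideanSpace ℝ (Fin n) := EuclideanSpace.single i 1 with he
  set g : ℝ → ℝ := fun s => partialDeriv' f (x + s • e) i with hg
  -- ψ s = f x + g 0 * s + L/2 s² - f (x + s e), want ψ t ≥ 0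
  have g0eq : g 0 = partialDeriv' f x i := by simp [hg]
  set ψ : ℝ → ℝ := fun s => f x + g 0 * s + Lmax / 2 * s ^ 2 - f (x + s • e) with hψ
  have hd : ∀ s : ℝ, HasDerivAt ψ (g 0 + Lmax * s - g s) s := by
    intro s
    have h1 : HasDerivAt (fun s : ℝ => f (x + s • e)) (g s) s := hasDerivAt_line hf x e s
    have h2 : HasDerivAt (fun s : ℝ => f x + g 0 * s + Lmax / 2 * s ^ 2)
        (g 0 + Lmax * s) s := by
      have := ((hasDerivAt_id s).const_mul (g 0)).const_add (f x)
      have h3 : HasDerivAt (fun s : ℝ => Lmax / 2 * s ^ 2) (Lmax / 2 * (2 * s)) s := by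
        simpa using ((hasDerivAt_pow 2 s).const_mul (Lmax / 2))
      have h4 := this.add h3
      convert h4 using 1
      exacts [rfl, rfl, rfl, by ring]
    exact h2.sub h1
  have hψ0 : ψ 0 = 0 := by simp [hψ]
  have key : ∀ s : ℝ, 0 ≤ ψ s := by
    intro s
    rcases le_or_gt 0 s with hs | hs
    · -- ψ antitone-reversed: deriv ψ ≥ ? on [0, s]: g 0 + L u - g u ≥ 0 for u ≥ 0
      have mono : MonotoneOn ψ (Set.Icc 0 s) := by
        apply monotoneOn_of_deriv_nonneg (convex_Icc 0 s)
        · exact fun u _ => ((hd u).continuousAt).continuousWithinAt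
        · exact fun u hu => ((hd u).differentiableAt).differentiableWithinAt
        · intro u hu
          rw [(hd u).deriv]
          have hu0 : 0 ≤ u := (Set.mem_Ioo.1 (by simpa using hu)).1.le
          have habs : g u - g 0 ≤ Lmax * |u| := by
            rw [g0eq]; exact (abs_le.1 (hLip x u i)).2
          rw [abs_of_nonneg hu0] at habs
          linarith
      have := mono (Set.left_mem_Icc.2 hs) (Set.right_mem_Icc.2 hs) hs
      rw [hψ0] at this
      exact this
    · have anti : AntitoneOn ψ (Set.Icc s 0) := by
        apply antitoneOn_of_deriv_nonpos (convex_Icc s 0)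
        · exact fun u _ => ((hd u).continuousAt).continuousWithinAt
        · exact fun u hu => ((hd u).differentiableAt).differentiableWithinAt
        · intro u hu
          rw [(hd u).deriv]
          have hu0 : u ≤ 0 := (Set.mem_Ioo.1 (by simpa using hu)).2.le
          have habs : -(Lmax * |u|) ≤ g u - g 0 := by
            rw [g0eq]; exact (abs_le.1 (hLip x u i)).1
          rw [abs_of_nonpos hu0] at habs
          linarith
      have := anti (Set.left_mem_Icc.2 hs.le) (Set.right_mem_Icc.2 hs.le) hs.le
      rw [hψ0] at this
      exact this
  have := key t
  simp only [hψ, g0eq] at this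
  linarith


lemma descent_step {n : ℕ} {f : EuclideanSpace ℝ (Fin n) → ℝ} (hf : Differentiable ℝ f)
    {Lmax : ℝ} (hL : 0 < Lmax)
    (hLip : ∀ (x : EuclideanSpace ℝ (Fin n)) (t : ℝ) (i : Fin n),
      |partialDeriv' f (x + t • EuclideanSpace.single i 1) i - partialDeriv' f x i| ≤
        Lmax * |t|)
    (x : EuclideanSpace ℝ (Fin n)) (i : Fin n) :
    f (cdStep f Lmax x i) ≤ f x - (partialDeriv' f x i) ^ 2 / (2 * Lmax) := by
  have h := quad_bound hf hL hLip x i (-(partialDeriv' f x i / Lmax))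
  have hx : cdStep f Lmax x i = x + (-(partialDeriv' f x i / Lmax)) • EuclideanSpace.single i 1 := by
    simp [cdStep, sub_eq_add_neg, neg_smul]
  rw [hx]
  calc f (x + (-(partialDeriv' f x i / Lmax)) • EuclideanSpace.single i 1)
      ≤ f x + partialDeriv' f x i * (-(partialDeriv' f x i / Lmax))
        + Lmax / 2 * (-(partialDeriv' f x i / Lmax)) ^ 2 := h
    _ = f x - (partialDeriv' f x i) ^ 2 / (2 * Lmax) := by
        field_simp
        ring

lemma convex_grad_ineq {n : ℕ} {f : EuclideanSpace ℝ (Fin n) → ℝ} (hf : Differentiable ℝ f)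
    (hconv : ConvexOn ℝ Set.univ f) (x y : EuclideanSpace ℝ (Fin n)) :
    f x + fderiv ℝ f x (y - x) ≤ f y := by
  set g : ℝ → ℝ := fun t => f (x + t • (y - x)) with hg
  have hgd : ∀ t : ℝ, HasDerivAt g (fderiv ℝ f (x + t • (y - x)) (y - x)) t :=
    fun t => hasDerivAt_line hf x (y - x) t
  have hgc : ConvexOn ℝ Set.univ g := by
    have : g = f ∘ (fun t : ℝ => x + t • (y - x)) := rfl
    rw [this]
    have haff : ConvexOn ℝ ((fun t : ℝ => x + t • (y - x)) ⁻¹' Set.univ)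
        (f ∘ (AffineMap.lineMap x y : ℝ →ᵃ[ℝ] EuclideanSpace ℝ (Fin n))) := by
      simpa using hconv.comp_affineMap (AffineMap.lineMap x y)
    have : ⇑(AffineMap.lineMap x y : ℝ →ᵃ[ℝ] EuclideanSpace ℝ (Fin n))
        = fun t : ℝ => x + t • (y - x) := by
      funext t
      simp [AffineMap.lineMap_apply]
      module
    rw [this] at haff
    simpa using haff
  have hslope := hgc.le_slope_of_hasDerivAt (Set.mem_univ (0:ℝ)) (Set.mem_univ (1:ℝ))
    one_pos (by simpa using hgd 0)
  rw [slope_def_field] at hslope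
  have hg0 : g 0 = f x := by simp [hg]
  have hg1 : g 1 = f y := by simp [hg]
  rw [hg0, hg1] at hslope
  have : (f y - f x) / (1 - 0) = f y - f x := by norm_num
  rw [this] at hslope
  simp only [map_sub]
  linarith [hslope]

lemma euclid_repr {n : ℕ} (y : EuclideanSpace ℝ (Fin n)) :
    (∑ i, y i • EuclideanSpace.single i (1:ℝ)) = y := by
  ext j
  have : (∑ i, y i • EuclideanSpace.single i (1:ℝ)) j
      = ∑ i, (y i • EuclideanSpace.single i (1:ℝ)) j := by
    rw [WithLp.ofLp_sum]; exact Finset.sum_apply j Finset.univ _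
  rw [this]
  simp [EuclideanSpace.single_apply]

lemma fderiv_expand {n : ℕ} (f : EuclideanSpace ℝ (Fin n) → ℝ)
    (x v : EuclideanSpace ℝ (Fin n)) :
    fderiv ℝ f x v = ∑ i, v i * partialDeriv' f x i := by
  conv_lhs => rw [← euclid_repr v]
  rw [map_sum]
  refine Finset.sum_congr rfl fun i _ => ?_
  rw [(fderiv ℝ f x).map_smul]
  rfl

lemma sq_dist_eq {n : ℕ} (v : EuclideanSpace ℝ (Fin n)) :
    ‖v‖ ^ 2 = ∑ i, (v i) ^ 2 := by
  rw [EuclideanSpace.norm_eq, Real.sq_sqrt (by positivity)]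
  simp [sq_abs]

/-- In the level set, `(f x - f*)² ≤ R₀² * ∑ (∂ᵢ f x)²`. -/
lemma gap_sq_le {n : ℕ} {f : EuclideanSpace ℝ (Fin n) → ℝ} (hf : Differentiable ℝ f)
    (hconv : ConvexOn ℝ Set.univ f)
    (xstar : EuclideanSpace ℝ (Fin n)) (hmin : ∀ y, f xstar ≤ f y)
    {R₀ : ℝ} (x : EuclideanSpace ℝ (Fin n)) (hxR : ‖x - xstar‖ ≤ R₀) :
    (f x - f xstar) ^ 2 ≤ R₀ ^ 2 * ∑ i, (partialDeriv' f x i) ^ 2 := by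
  have hgap : f x - f xstar ≤ ∑ i, (x i - xstar i) * partialDeriv' f x i := by
    have h := convex_grad_ineq hf hconv x xstar
    have h2 : fderiv ℝ f x (xstar - x) = ∑ i, (xstar i - x i) * partialDeriv' f x i := by
      rw [fderiv_expand]
      refine Finset.sum_congr rfl fun i _ => ?_
      congr 1
    have : f x - f xstar ≤ - fderiv ℝ f x (xstar - x) := by linarith
    rw [h2] at this
    refine this.trans (le_of_eq ?_)
    rw [← Finset.sum_neg_distrib]
    refine Finset.sum_congr rfl fun i _ => by ring
  have hnn : 0 ≤ f x - f xstar := sub_nonneg.2 (hmin x)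
  have hcs : (∑ i, (x i - xstar i) * partialDeriv' f x i) ^ 2 ≤
      (∑ i, (x i - xstar i) ^ 2) * ∑ i, (partialDeriv' f x i) ^ 2 :=
    Finset.sum_mul_sq_le_sq_mul_sq _ _ _
  have hsum : ∑ i, (x i - xstar i) ^ 2 = ‖x - xstar‖ ^ 2 := by
    rw [sq_dist_eq]
    refine Finset.sum_congr rfl fun i _ => by congr 1
  have hR2 : ‖x - xstar‖ ^ 2 ≤ R₀ ^ 2 := by
    have h0 : (0:ℝ) ≤ ‖x - xstar‖ := norm_nonneg _
    nlinarith
  calc (f x - f xstar) ^ 2 ≤ (∑ i, (x i - xstar i) * partialDeriv' f x i) ^ 2 := by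
        apply sq_le_sq' <;> nlinarith [hgap, hnn]
    _ ≤ (∑ i, (x i - xstar i) ^ 2) * ∑ i, (partialDeriv' f x i) ^ 2 := hcs
    _ ≤ R₀ ^ 2 * ∑ i, (partialDeriv' f x i) ^ 2 := by
        rw [hsum]
        apply mul_le_mul_of_nonneg_right hR2
        positivity

lemma seq_rate {C : ℝ} (hC : 0 < C) (a : ℕ → ℝ) (ha0 : ∀ k, 0 ≤ a k)
    (hrec : ∀ k, a (k + 1) ≤ a k - (a k) ^ 2 / C) (hstart : a 0 ≤ C) :
    ∀ k : ℕ, 1 ≤ k → a k ≤ C / k := by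
  intro k hk
  induction k with
  | zero => omega
  | succ m ih =>
    rcases Nat.eq_or_lt_of_le hk with h1 | h1
    · -- m = 0
      have hm : m = 0 := by omega
      subst hm
      have := hrec 0
      have h2 : (a 0) ^ 2 / C ≥ 0 := by positivity
      simpa using le_trans this (by linarith)
    · have hm1 : 1 ≤ m := by omega
      have ihm := ih hm1
      have hrecm := hrec m
      have ham := ha0 m
      set t := a m with ht
      have hkm : (0:ℝ) < m := by exact_mod_cast hm1
      rcases le_or_gt t (C / (m + 1)) with hcase | hcase
      · have hd : 0 ≤ t ^ 2 / C := by positivity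
        have : a (m + 1) ≤ t := by linarith
        calc a (m + 1) ≤ t := this
          _ ≤ C / (m + 1) := hcase
          _ = C / ((m:ℝ) + 1) := by norm_num
          _ = C / ((m + 1 : ℕ):ℝ) := by push_cast; ring_nf
      · -- C/(m+1) < t ≤ C/m
        have hmR : (0:ℝ) < (m:ℝ) + 1 := by positivity
        have h1' : 0 ≤ t * ((m:ℝ) + 1) - C := by
          rw [div_lt_iff₀ hmR] at hcase
          linarith
        have h2' : 0 ≤ C - (m:ℝ) * t := by
          rw [le_div_iff₀ hkm] at ihm
          linarith
        have he : t ^ 2 / C * C = t ^ 2 := div_mul_cancel₀ _ hC.ne'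
        have key : t - t ^ 2 / C ≤ C / ((m:ℝ) + 1) := by
          rw [le_div_iff₀ hmR]
          nlinarith [he, mul_nonneg hC.le h2', mul_nonneg hC.le h1',
            sq_nonneg (t * ((m:ℝ) + 1) - C), hC.le, h1', h2']
        calc a (m + 1) ≤ t - t ^ 2 / C := hrecm
          _ ≤ C / ((m:ℝ) + 1) := key
          _ = C / ((m + 1 : ℕ):ℝ) := by push_cast; ring_nf

lemma cdIter_congr {n : ℕ} (f : EuclideanSpace ℝ (Fin n) → ℝ) (L : ℝ)
    (x₀ : EuclideanSpace ℝ (Fin n)) (ω ω' : ℕ → Fin n) :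
    ∀ k : ℕ, (∀ j, j < k → ω j = ω' j) → cdIter f L x₀ ω k = cdIter f L x₀ ω' k := by
  intro k
  induction k with
  | zero => intro _; rfl
  | succ m ih =>
    intro h
    show cdStep f L (cdIter f L x₀ ω m) (ω m) = cdStep f L (cdIter f L x₀ ω' m) (ω' m)
    rw [ih (fun j hj => h j (Nat.lt_succ_of_lt hj)), h m (Nat.lt_succ_self m)]

def extFn {n k : ℕ} (d : Fin n) (σ : Fin k → Fin n) : ℕ → Fin n :=
  fun j => if h : j < k then σ ⟨j, h⟩ else d

lemma sum_succ_step {n : ℕ} (f : EuclideanSpace ℝ (Fin n) → ℝ) (L : ℝ)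
    (x₀ : EuclideanSpace ℝ (Fin n)) (d : Fin n) (k : ℕ) :
    ∑ τ : Fin (k + 1) → Fin n, f (cdIter f L x₀ (extFn d τ) (k + 1)) =
      ∑ σ : Fin k → Fin n, ∑ i : Fin n,
        f (cdStep f L (cdIter f L x₀ (extFn d σ) k) i) := by
  rw [← Equiv.sum_comp (Fin.snocEquiv (fun _ => Fin n))
    (fun τ => f (cdIter f L x₀ (extFn d τ) (k + 1)))]
  rw [Fintype.sum_prod_type]
  rw [Finset.sum_comm]
  refine Finset.sum_congr rfl fun σ _ => Finset.sum_congr rfl fun i _ => ?_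
  congr 1
  show cdStep f L (cdIter f L x₀ (extFn d (Fin.snocEquiv _ (i, σ))) k)
      ((extFn d (Fin.snocEquiv _ (i, σ))) k) = _
  have h1 : (extFn d (Fin.snocEquiv (fun _ => Fin n) (i, σ))) k = i := by
    simp [extFn, Fin.snocEquiv]
    have : (⟨k, Nat.lt_succ_self k⟩ : Fin (k+1)) = Fin.last k := rfl
    rw [this, Fin.snoc_last]
  have h2 : cdIter f L x₀ (extFn d (Fin.snocEquiv (fun _ => Fin n) (i, σ))) k
      = cdIter f L x₀ (extFn d σ) k := by
    apply cdIter_congr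
    intro j hj
    simp only [extFn, Fin.snocEquiv, Equiv.coe_fn_mk]
    rw [dif_pos (Nat.lt_succ_of_lt hj), dif_pos hj]
    have : (⟨j, Nat.lt_succ_of_lt hj⟩ : Fin (k+1)) = Fin.castSucc ⟨j, hj⟩ := rfl
    rw [this, Fin.snoc_castSucc]
  rw [h1, h2]

noncomputable def Xit {n : ℕ} (f : EuclideanSpace ℝ (Fin n) → ℝ) (L : ℝ)
    (x₀ : EuclideanSpace ℝ (Fin n)) (d : Fin n) (k : ℕ) (σ : Fin k → Fin n) :
    EuclideanSpace ℝ (Fin n) :=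
  cdIter f L x₀ (extFn d σ) k

noncomputable def Sval {n : ℕ} (f : EuclideanSpace ℝ (Fin n) → ℝ) (L : ℝ)
    (x₀ : EuclideanSpace ℝ (Fin n)) (d : Fin n) (k : ℕ) : ℝ :=
  ∑ σ : Fin k → Fin n, f (Xit f L x₀ d k σ)

noncomputable def Gval {n : ℕ} (f : EuclideanSpace ℝ (Fin n) → ℝ)
    (x : EuclideanSpace ℝ (Fin n)) : ℝ :=
  ∑ i, (partialDeriv' f x i) ^ 2

lemma Gval_nonneg {n : ℕ} (f : EuclideanSpace ℝ (Fin n) → ℝ) (x : EuclideanSpace ℝ (Fin n)) :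
    0 ≤ Gval f x :=
  Finset.sum_nonneg fun i _ => sq_nonneg _

lemma cdIter_le {n : ℕ} {f : EuclideanSpace ℝ (Fin n) → ℝ} (hf : Differentiable ℝ f)
    {Lmax : ℝ} (hL : 0 < Lmax)
    (hLip : ∀ (x : EuclideanSpace ℝ (Fin n)) (t : ℝ) (i : Fin n),
      |partialDeriv' f (x + t • EuclideanSpace.single i 1) i - partialDeriv' f x i| ≤
        Lmax * |t|)
    (x₀ : EuclideanSpace ℝ (Fin n)) (ω : ℕ → Fin n) (k : ℕ) :
    f (cdIter f Lmax x₀ ω k) ≤ f x₀ := by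
  induction k with
  | zero => exact le_rfl
  | succ m ih =>
    have h := descent_step hf hL hLip (cdIter f Lmax x₀ ω m) (ω m)
    have h2 : 0 ≤ (partialDeriv' f (cdIter f Lmax x₀ ω m) (ω m)) ^ 2 / (2 * Lmax) := by
      positivity
    calc f (cdIter f Lmax x₀ ω (m + 1)) ≤ f (cdIter f Lmax x₀ ω m) - _ := h
      _ ≤ f (cdIter f Lmax x₀ ω m) := by linarith
      _ ≤ f x₀ := ih

lemma Sval_rec {n : ℕ} {f : EuclideanSpace ℝ (Fin n) → ℝ} (hf : Differentiable ℝ f)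
    {Lmax : ℝ} (hL : 0 < Lmax)
    (hLip : ∀ (x : EuclideanSpace ℝ (Fin n)) (t : ℝ) (i : Fin n),
      |partialDeriv' f (x + t • EuclideanSpace.single i 1) i - partialDeriv' f x i| ≤
        Lmax * |t|)
    (x₀ : EuclideanSpace ℝ (Fin n)) (d : Fin n) (k : ℕ) :
    Sval f Lmax x₀ d (k + 1) ≤ n * Sval f Lmax x₀ d k
      - (1 / (2 * Lmax)) * ∑ σ : Fin k → Fin n, Gval f (Xit f Lmax x₀ d k σ) := by
  rw [Sval]
  simp only [Xit]
  rw [sum_succ_step]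
  have hpt : ∀ σ : Fin k → Fin n,
      (∑ i : Fin n, f (cdStep f Lmax (cdIter f Lmax x₀ (extFn d σ) k) i)) ≤
        n * f (Xit f Lmax x₀ d k σ) - (1 / (2 * Lmax)) * Gval f (Xit f Lmax x₀ d k σ) := by
    intro σ
    have h1 : ∀ i : Fin n, f (cdStep f Lmax (Xit f Lmax x₀ d k σ) i) ≤
        f (Xit f Lmax x₀ d k σ) - (partialDeriv' f (Xit f Lmax x₀ d k σ) i) ^ 2 / (2 * Lmax) :=
      fun i => descent_step hf hL hLip _ i
    calc (∑ i : Fin n, f (cdStep f Lmax (cdIter f Lmax x₀ (extFn d σ) k) i))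
        ≤ ∑ i : Fin n, (f (Xit f Lmax x₀ d k σ)
            - (partialDeriv' f (Xit f Lmax x₀ d k σ) i) ^ 2 / (2 * Lmax)) :=
          Finset.sum_le_sum fun i _ => h1 i
      _ = n * f (Xit f Lmax x₀ d k σ) - (1 / (2 * Lmax)) * Gval f (Xit f Lmax x₀ d k σ) := by
          rw [Finset.sum_sub_distrib, Finset.sum_const, Finset.card_univ, Fintype.card_fin,
            Gval, Finset.mul_sum, ← Finset.sum_div]
          simp only [nsmul_eq_mul]
          congr 1
          rw [Finset.sum_div]
          refine Finset.sum_congr rfl fun i _ => by ring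
  calc (∑ σ : Fin k → Fin n, ∑ i : Fin n,
        f (cdStep f Lmax (cdIter f Lmax x₀ (extFn d σ) k) i))
      ≤ ∑ σ : Fin k → Fin n, (n * f (Xit f Lmax x₀ d k σ)
          - (1 / (2 * Lmax)) * Gval f (Xit f Lmax x₀ d k σ)) :=
        Finset.sum_le_sum fun σ _ => hpt σ
    _ = n * Sval f Lmax x₀ d k
        - (1 / (2 * Lmax)) * ∑ σ : Fin k → Fin n, Gval f (Xit f Lmax x₀ d k σ) := by
        rw [Finset.sum_sub_distrib, ← Finset.mul_sum, ← Finset.mul_sum, Sval]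


/-- Randomized coordinate descent on a C², convex `f : ℝⁿ → ℝ` whose partial
derivatives are uniformly `L_max`-Lipschitz along their own coordinates, with minimizer
`x*` and level-set radius bound `R₀` at `x₀`, satisfies for every `k ≥ 1`
`E[f(x_k)] − f* ≤ 2 n L_max R₀² / k`, where the expectation is the uniform average
over all `n^k` choices of the first `k` coordinate indices. -/
theorem randomized_coordinate_descent_sublinear_rate
    {n : ℕ} (hn : 0 < n) (f : EuclideanSpace ℝ (Fin n) → ℝ)
    (hf : ContDiff ℝ 2 f)
    (hconv : ConvexOn ℝ Set.univ f)
    (Lmax : ℝ) (hL : 0 < Lmax)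
    (hLip : ∀ (x : EuclideanSpace ℝ (Fin n)) (t : ℝ) (i : Fin n),
      |partialDeriv' f (x + t • EuclideanSpace.single i 1) i - partialDeriv' f x i| ≤
        Lmax * |t|)
    (xstar : EuclideanSpace ℝ (Fin n)) (hmin : ∀ y, f xstar ≤ f y)
    (x₀ : EuclideanSpace ℝ (Fin n)) (R₀ : ℝ)
    (hR : ∀ x, f x ≤ f x₀ → ‖x - xstar‖ ≤ R₀)
    (k : ℕ) (hk : 1 ≤ k) :
    ((n : ℝ) ^ k)⁻¹ * (∑ σ : Fin k → Fin n,
        f (cdIter f Lmax x₀ (fun j => if h : j < k then σ ⟨j, h⟩ else ⟨0, hn⟩) k))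
      - f xstar ≤ 2 * n * Lmax * R₀ ^ 2 / k := by
  have hfd : Differentiable ℝ f := hf.differentiable (by norm_num)
  set d : Fin n := ⟨0, hn⟩ with hd
  have hNpos : (0 : ℝ) < n := by exact_mod_cast hn
  have hNk : ∀ m : ℕ, (0 : ℝ) < (n : ℝ) ^ m := fun m => pow_pos hNpos m
  -- the sequence of gaps
  set a : ℕ → ℝ := fun m => ((n : ℝ) ^ m)⁻¹ * Sval f Lmax x₀ d m - f xstar with ha
  -- the goal is about a k
  have hgoal : ((n : ℝ) ^ k)⁻¹ * (∑ σ : Fin k → Fin n,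
        f (cdIter f Lmax x₀ (fun j => if h : j < k then σ ⟨j, h⟩ else ⟨0, hn⟩) k))
      - f xstar = a k := rfl
  rw [hgoal]
  -- basic facts
  have hcard : ∀ m : ℕ, (Finset.univ : Finset (Fin m → Fin n)).card = n ^ m := by
    intro m
    rw [Finset.card_univ, Fintype.card_fun, Fintype.card_fin, Fintype.card_fin]
  have hSge : ∀ m : ℕ, ((n : ℝ) ^ m) * f xstar ≤ Sval f Lmax x₀ d m := by
    intro m
    have := Finset.card_nsmul_le_sum (Finset.univ : Finset (Fin m → Fin n))
      (fun σ => f (Xit f Lmax x₀ d m σ)) (f xstar) (fun σ _ => hmin _)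
    rw [hcard m, nsmul_eq_mul] at this
    rw [Sval]
    exact_mod_cast this
  have ha_nonneg : ∀ m : ℕ, 0 ≤ a m := by
    intro m
    have h1 := hSge m
    have h2 : ((n : ℝ) ^ m)⁻¹ * (((n : ℝ) ^ m) * f xstar) ≤
        ((n : ℝ) ^ m)⁻¹ * Sval f Lmax x₀ d m :=
      mul_le_mul_of_nonneg_left h1 (by positivity)
    rw [← mul_assoc, inv_mul_cancel₀ (hNk m).ne', one_mul] at h2
    simp only [ha]
    linarith
  have hlevel : ∀ m (σ : Fin m → Fin n), f (Xit f Lmax x₀ d m σ) ≤ f x₀ :=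
    fun m σ => cdIter_le hfd hL hLip x₀ _ m
  -- R₀ ≥ 0
  have hR0 : 0 ≤ R₀ := le_trans (norm_nonneg _) (hR x₀ le_rfl)
  -- key quadratic gap bound summed
  have hgapsum : ∀ m : ℕ, (Sval f Lmax x₀ d m - ((n : ℝ) ^ m) * f xstar) ^ 2 ≤
      ((n : ℝ) ^ m) * (R₀ ^ 2 * ∑ σ : Fin m → Fin n, Gval f (Xit f Lmax x₀ d m σ)) := by
    intro m
    have h1 : ∀ σ : Fin m → Fin n, (f (Xit f Lmax x₀ d m σ) - f xstar) ^ 2 ≤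
        R₀ ^ 2 * Gval f (Xit f Lmax x₀ d m σ) :=
      fun σ => gap_sq_le hfd hconv xstar hmin _ (hR _ (hlevel m σ))
    have h2 : (∑ σ : Fin m → Fin n, (f (Xit f Lmax x₀ d m σ) - f xstar)) ^ 2 ≤
        ((n : ℝ) ^ m) * ∑ σ : Fin m → Fin n, (f (Xit f Lmax x₀ d m σ) - f xstar) ^ 2 := by
      have := sq_sum_le_card_mul_sum_sq (s := (Finset.univ : Finset (Fin m → Fin n)))
        (f := fun σ => f (Xit f Lmax x₀ d m σ) - f xstar)
      rw [hcard m] at this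
      exact_mod_cast this
    have h3 : ∑ σ : Fin m → Fin n, (f (Xit f Lmax x₀ d m σ) - f xstar) =
        Sval f Lmax x₀ d m - ((n : ℝ) ^ m) * f xstar := by
      rw [Finset.sum_sub_distrib, Finset.sum_const, hcard m, nsmul_eq_mul, Sval]
      push_cast
      ring
    have h4 : ∑ σ : Fin m → Fin n, (f (Xit f Lmax x₀ d m σ) - f xstar) ^ 2 ≤
        R₀ ^ 2 * ∑ σ : Fin m → Fin n, Gval f (Xit f Lmax x₀ d m σ) := by
      rw [Finset.mul_sum]
      exact Finset.sum_le_sum fun σ _ => h1 σ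
    rw [h3] at h2
    calc (Sval f Lmax x₀ d m - ((n : ℝ) ^ m) * f xstar) ^ 2
        ≤ ((n : ℝ) ^ m) * ∑ σ : Fin m → Fin n, (f (Xit f Lmax x₀ d m σ) - f xstar) ^ 2 := h2
      _ ≤ ((n : ℝ) ^ m) * (R₀ ^ 2 * ∑ σ : Fin m → Fin n, Gval f (Xit f Lmax x₀ d m σ)) :=
          mul_le_mul_of_nonneg_left h4 (hNk m).le
  rcases eq_or_lt_of_le hR0 with hR0eq | hR0pos
  · -- R₀ = 0 : everything collapses
    have h := hgapsum k
    rw [← hR0eq] at h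
    simp only [ne_eq, OfNat.ofNat_ne_zero, not_false_eq_true, zero_pow, zero_mul, mul_zero] at h
    have hz : Sval f Lmax x₀ d k - ((n : ℝ) ^ k) * f xstar = 0 := by
      have := sq_nonneg (Sval f Lmax x₀ d k - ((n : ℝ) ^ k) * f xstar)
      have heq : (Sval f Lmax x₀ d k - ((n : ℝ) ^ k) * f xstar) ^ 2 = 0 := le_antisymm h this
      exact pow_eq_zero_iff (n := 2) (by norm_num) |>.1 heq
    have hak : a k = 0 := by
      simp only [ha]
      have hS : Sval f Lmax x₀ d k = ((n : ℝ) ^ k) * f xstar := by linarith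
      rw [hS, ← mul_assoc, inv_mul_cancel₀ (hNk k).ne', one_mul, sub_self]
    rw [hak, ← hR0eq]
    positivity
  · -- R₀ > 0
    set C : ℝ := 2 * (n : ℝ) * Lmax * R₀ ^ 2 with hC_def
    have hC : 0 < C := by positivity
    have hrec : ∀ m : ℕ, a (m + 1) ≤ a m - a m ^ 2 / C := by
      intro m
      have h1 := Sval_rec hfd hL hLip x₀ d m
      set T : ℝ := ∑ σ : Fin m → Fin n, Gval f (Xit f Lmax x₀ d m σ) with hT
      have hTnn : 0 ≤ T := Finset.sum_nonneg fun σ _ => Gval_nonneg f _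
      have e1 : ((n : ℝ) ^ (m + 1))⁻¹ * ((n : ℝ) * Sval f Lmax x₀ d m) =
          ((n : ℝ) ^ m)⁻¹ * Sval f Lmax x₀ d m := by
        rw [pow_succ, mul_inv]
        field_simp
      have h2 : a (m + 1) ≤ a m - ((n : ℝ) ^ (m + 1))⁻¹ * ((1 / (2 * Lmax)) * T) := by
        have h2a : ((n : ℝ) ^ (m + 1))⁻¹ * Sval f Lmax x₀ d (m + 1) ≤
            ((n : ℝ) ^ (m + 1))⁻¹ * ((n : ℝ) * Sval f Lmax x₀ d m - (1 / (2 * Lmax)) * T) :=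
          mul_le_mul_of_nonneg_left h1 (by positivity)
        rw [mul_sub, e1] at h2a
        simp only [ha]
        linarith
      have hae : a m = ((n : ℝ) ^ m)⁻¹ * (Sval f Lmax x₀ d m - ((n : ℝ) ^ m) * f xstar) := by
        simp only [ha]
        rw [mul_sub, ← mul_assoc, inv_mul_cancel₀ (hNk m).ne', one_mul]
      have hsq : a m ^ 2 ≤ ((n : ℝ) ^ m)⁻¹ * (R₀ ^ 2 * T) := by
        rw [hae, mul_pow]
        calc (((n : ℝ) ^ m)⁻¹) ^ 2 * (Sval f Lmax x₀ d m - ((n : ℝ) ^ m) * f xstar) ^ 2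
            ≤ (((n : ℝ) ^ m)⁻¹) ^ 2 * (((n : ℝ) ^ m) * (R₀ ^ 2 * T)) :=
              mul_le_mul_of_nonneg_left (hgapsum m) (by positivity)
          _ = ((n : ℝ) ^ m)⁻¹ * (R₀ ^ 2 * T) := by
              field_simp
      have h3 : a m ^ 2 / C ≤ ((n : ℝ) ^ (m + 1))⁻¹ * ((1 / (2 * Lmax)) * T) := by
        have hEq : ((n : ℝ) ^ m)⁻¹ * (R₀ ^ 2 * T) / C =
            ((n : ℝ) ^ (m + 1))⁻¹ * ((1 / (2 * Lmax)) * T) := by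
          rw [hC_def, pow_succ]
          field_simp
          ring
        calc a m ^ 2 / C ≤ ((n : ℝ) ^ m)⁻¹ * (R₀ ^ 2 * T) / C := by gcongr
          _ = ((n : ℝ) ^ (m + 1))⁻¹ * ((1 / (2 * Lmax)) * T) := hEq
      linarith
    have hstart : a 0 ≤ C := by
      clear_value a C d
      have h01 : a 1 ≤ a 0 - a 0 ^ 2 / C := hrec 0
      have h1nn := ha_nonneg 1
      have h0nn := ha_nonneg 0
      have hdiv : a 0 ^ 2 / C ≤ a 0 := by linarith [h01, h1nn]
      rw [div_le_iff₀ hC] at hdiv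
      nlinarith [hdiv, h0nn, hC]
    exact seq_rate hC a ha_nonneg hrec hstart k hk
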